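/- Positive conditional action variance lower-bounds the information gap: with V = v(S,G) and a family of action sets B : 𝒮 × 𝒱 → Set 𝒜, define q(s,v,g) := P(A ∈ B(s,v) ∣ S = s, V = v, G = g) and q̄(s,v) := P(A ∈ B(s,v) ∣ S = s, V = v) (for triples/pairs of positive probability). Then I(A;G|S,V) ≥ 2 · ∑_{(s,v,g) : P(S=s,V=v,G=g) > 0} P(S=s, V=v, G=g) · ( q(s,v,g) − q̄(s,v) )². In particular, if this expected conditional variance is strictly positive, then I(A;G|S,V) > 0. -/

import Mathlib

open scoped Classical
open Finset

/-- Joint probability `P(f = x)` of a discrete random variable `f` on the sample space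
`𝒮 × 𝒢 × 𝒜` equipped with the pmf `p`. -/
noncomputable def Pr {𝒮 𝒢 𝒜 : Type*} [Fintype 𝒮] [Fintype 𝒢] [Fintype 𝒜] {X : Type*}
    (p : 𝒮 × 𝒢 × 𝒜 → ℝ) (f : 𝒮 × 𝒢 × 𝒜 → X) (x : X) : ℝ :=
  ∑ ω : 𝒮 × 𝒢 × 𝒜, if f ω = x then p ω else 0

/-- Conditional mutual information `I(X;Y|W)` of discrete random variables that are
deterministic functions of a sample drawn from the pmf `p` on `𝒮 × 𝒢 × 𝒜`. -/
noncomputable def CMI {𝒮 𝒢 𝒜 : Type*} [Fintype 𝒮] [Fintype 𝒢] [Fintype 𝒜]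
    {X Y W : Type*} [Fintype X] [Fintype Y] [Fintype W]
    (p : 𝒮 × 𝒢 × 𝒜 → ℝ) (fX : 𝒮 × 𝒢 × 𝒜 → X) (fY : 𝒮 × 𝒢 × 𝒜 → Y)
    (fW : 𝒮 × 𝒢 × 𝒜 → W) : ℝ :=
  ∑ x : X, ∑ y : Y, ∑ w : W,
    if 0 < Pr p (fun ω => (fX ω, fY ω, fW ω)) (x, y, w) then
      Pr p (fun ω => (fX ω, fY ω, fW ω)) (x, y, w) *
        Real.log ((Pr p (fun ω => (fX ω, fY ω, fW ω)) (x, y, w) * Pr p fW w) /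
          (Pr p (fun ω => (fX ω, fW ω)) (x, w) * Pr p (fun ω => (fY ω, fW ω)) (y, w)))
    else 0

/-- Marginal `p(s,g) := ∑ₐ p(s,g,a)`. -/
noncomputable def pSG {𝒮 𝒢 𝒜 : Type*} [Fintype 𝒜] (p : 𝒮 × 𝒢 × 𝒜 → ℝ) (s : 𝒮) (g : 𝒢) : ℝ :=
  ∑ a : 𝒜, p (s, g, a)

/-- Conditional `p(a|s,g) := p(s,g,a) / p(s,g)`. -/
noncomputable def pA {𝒮 𝒢 𝒜 : Type*} [Fintype 𝒜] (p : 𝒮 × 𝒢 × 𝒜 → ℝ) (s : 𝒮) (g : 𝒢)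
    (a : 𝒜) : ℝ :=
  p (s, g, a) / pSG p s g

/-- Conditional probability `q(s,v,g) := P(A ∈ B(s,v) | S = s, V = v, G = g)`. -/
noncomputable def qSVG {𝒮 𝒢 𝒜 𝒱 : Type*} [Fintype 𝒮] [Fintype 𝒢] [Fintype 𝒜]
    (p : 𝒮 × 𝒢 × 𝒜 → ℝ) (v : 𝒮 × 𝒢 → 𝒱) (B : 𝒮 × 𝒱 → Set 𝒜)
    (s : 𝒮) (vv : 𝒱) (g : 𝒢) : ℝ :=
  (∑ ω : 𝒮 × 𝒢 × 𝒜,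
      if ω.1 = s ∧ v (ω.1, ω.2.1) = vv ∧ ω.2.1 = g ∧ ω.2.2 ∈ B (s, vv) then p ω else 0) /
    (∑ ω : 𝒮 × 𝒢 × 𝒜, if ω.1 = s ∧ v (ω.1, ω.2.1) = vv ∧ ω.2.1 = g then p ω else 0)

/-- Conditional probability `q̄(s,v) := P(A ∈ B(s,v) | S = s, V = v)`. -/
noncomputable def qSV {𝒮 𝒢 𝒜 𝒱 : Type*} [Fintype 𝒮] [Fintype 𝒢] [Fintype 𝒜]
    (p : 𝒮 × 𝒢 × 𝒜 → ℝ) (v : 𝒮 × 𝒢 → 𝒱) (B : 𝒮 × 𝒱 → Set 𝒜)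
    (s : 𝒮) (vv : 𝒱) : ℝ :=
  (∑ ω : 𝒮 × 𝒢 × 𝒜,
      if ω.1 = s ∧ v (ω.1, ω.2.1) = vv ∧ ω.2.2 ∈ B (s, vv) then p ω else 0) /
    (∑ ω : 𝒮 × 𝒢 × 𝒜, if ω.1 = s ∧ v (ω.1, ω.2.1) = vv then p ω else 0)

/-! ### Auxiliary lemmas -/

section Aux

lemma aux_one_sub_div_le_log (u : ℝ) (hu : 0 < u) : 1 - 1/u ≤ Real.log u := by
  have := Real.log_le_sub_one_of_pos (x := u⁻¹) (by positivity)
  rw [Real.log_inv, one_div] at *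
  linarith

lemma aux_pinsker_aux (y : ℝ) (hy0 : 0 ≤ y) (hy1 : y < 1) : 2*y^2 ≤ -Real.log (1-y) := by
  set f : ℝ → ℝ := fun t => -Real.log (1-t) - 2*t^2 with hf
  have hderiv : ∀ t ∈ Set.Ioo (0:ℝ) y, HasDerivAt f ((1-t)⁻¹ - 4*t) t := by
    intro t ht
    have h1 : (1:ℝ) - t ≠ 0 := by nlinarith [ht.2]
    have hlog : HasDerivAt (fun t : ℝ => Real.log (1-t)) (-(1-t)⁻¹) t := by
      have := (Real.hasDerivAt_log h1).comp t ((hasDerivAt_id t).const_sub 1)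
      simp at this
      exact this
    have hpow : HasDerivAt (fun t : ℝ => 2*t^2) (4*t) t := by
      have := (hasDerivAt_pow 2 t).const_mul (2:ℝ)
      exact this.congr_deriv (by norm_num; ring)
    have := hlog.neg.sub hpow
    exact this.congr_deriv (by ring)
  have hmono : MonotoneOn f (Set.Icc 0 y) := by
    apply monotoneOn_of_deriv_nonneg (convex_Icc 0 y)
    · apply ContinuousOn.sub
      · apply ContinuousOn.neg
        apply Real.continuousOn_log.comp (by fun_prop)
        intro t ht
        simp only [Set.mem_Icc] at ht
        simp only [Set.mem_compl_iff, Set.mem_singleton_iff]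
        nlinarith [ht.2]
      · fun_prop
    · intro t ht
      rw [interior_Icc] at ht
      exact ((hderiv t ht).differentiableAt).differentiableWithinAt
    · intro t ht
      rw [interior_Icc] at ht
      rw [(hderiv t ht).deriv]
      have h1 : (0:ℝ) < 1 - t := by nlinarith [ht.2]
      have : (1-t)⁻¹ - 4*t = (1-2*t)^2 / (1-t) := by field_simp; ring
      rw [this]; positivity
  rcases eq_or_lt_of_le hy0 with h | h
  · simp [← h]
  · have := hmono (Set.mem_Icc.2 ⟨le_refl 0, hy0⟩) (Set.mem_Icc.2 ⟨hy0, le_refl y⟩) hy0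
    simp only [hf] at this
    simp at this ⊢
    linarith [this]

lemma aux_pinsker_interior (x y : ℝ) (hx0 : 0 < x) (hx1 : x < 1) (hy0 : 0 < y) (hy1 : y < 1) :
    2*(x-y)^2 ≤ x*Real.log (x/y) + (1-x)*Real.log ((1-x)/(1-y)) := by
  set F : ℝ → ℝ := fun t => x*Real.log x - x*Real.log t + (1-x)*Real.log (1-x)
      - (1-x)*Real.log (1-t) - 2*(x-t)^2 with hF
  have hderiv : ∀ t : ℝ, 0 < t → t < 1 →
      HasDerivAt F ((t-x)*((t*(1-t))⁻¹ - 4)) t := by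
    intro t ht0 ht1
    have h1 : t ≠ 0 := ne_of_gt ht0
    have h2 : (1:ℝ) - t ≠ 0 := by nlinarith
    have hlog1 : HasDerivAt (fun t : ℝ => x * Real.log t) (x * t⁻¹) t :=
      (Real.hasDerivAt_log h1).const_mul x
    have hlog2 : HasDerivAt (fun t : ℝ => (1-x) * Real.log (1-t)) ((1-x) * (-(1-t)⁻¹)) t := by
      have := ((Real.hasDerivAt_log h2).comp t ((hasDerivAt_id t).const_sub 1)).const_mul (1-x)
      exact this.congr_deriv (by ring)
    have hsq : HasDerivAt (fun t : ℝ => 2*(x-t)^2) (2*(2*(x-t)*(-1))) t := by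
      have := (((hasDerivAt_id t).const_sub x).pow 2).const_mul (2:ℝ)
      exact this.congr_deriv (by simp)
    have := (((hasDerivAt_const t (x*Real.log x)).sub hlog1).add
      (hasDerivAt_const t ((1-x)*Real.log (1-x)))).sub hlog2 |>.sub hsq
    refine this.congr_deriv ?_
    have ht : t*(1-t) ≠ 0 := mul_ne_zero h1 h2
    field_simp
    ring
  have hkey : ∀ t, 0 < t → t < 1 → (0:ℝ) ≤ ((t*(1-t))⁻¹ - 4) := by
    intro t ht0 ht1
    have h : (0:ℝ) < t*(1-t) := by nlinarith
    have : (t*(1-t))⁻¹ - 4 = (1-2*t)^2 / (t*(1-t)) := by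
      have h1 : t ≠ 0 := ht0.ne'
      have h2 : (1:ℝ) - t ≠ 0 := (by linarith : (0:ℝ) < 1 - t).ne'
      field_simp
      ring
    rw [this]; positivity
  have hcont : ∀ a b : ℝ, 0 < a → b < 1 → ContinuousOn F (Set.Icc a b) := by
    intro a b ha hb
    have hc : ∀ t ∈ Set.Icc a b, t ≠ 0 := fun t ht => by
      have := ht.1; intro h; nlinarith
    have hc2 : ∀ t ∈ Set.Icc a b, (1:ℝ) - t ≠ 0 := fun t ht => by
      have := ht.2; intro h; nlinarith
    apply ContinuousOn.sub
    apply ContinuousOn.sub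
    apply ContinuousOn.add
    apply ContinuousOn.sub continuousOn_const
    · exact (Real.continuousOn_log.comp (by fun_prop) (fun t ht => hc t ht)).const_smul x |>.congr (by intro t ht; simp [smul_eq_mul])
    · exact continuousOn_const
    · exact ((Real.continuousOn_log.comp (by fun_prop) (fun t ht => hc2 t ht)).const_smul (1-x)).congr (by intro t ht; simp [smul_eq_mul])
    · fun_prop
  have hFx : F x = 0 := by simp [hF]
  have goal : 0 ≤ F y := by
    rcases lt_trichotomy x y with h | h | h
    · have hmono : MonotoneOn F (Set.Icc x y) := by
        apply monotoneOn_of_deriv_nonneg (convex_Icc x y) (hcont x y hx0 hy1)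
        · intro t ht
          rw [interior_Icc] at ht
          exact ((hderiv t (lt_trans hx0 ht.1) (lt_trans ht.2 hy1)).differentiableAt).differentiableWithinAt
        · intro t ht
          rw [interior_Icc] at ht
          rw [(hderiv t (lt_trans hx0 ht.1) (lt_trans ht.2 hy1)).deriv]
          have := hkey t (lt_trans hx0 ht.1) (lt_trans ht.2 hy1)
          have ht1 : 0 ≤ t - x := by linarith [ht.1]
          positivity
      have := hmono (Set.mem_Icc.2 ⟨le_refl x, le_of_lt h⟩) (Set.mem_Icc.2 ⟨le_of_lt h, le_refl y⟩) (le_of_lt h)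
      rw [hFx] at this; exact this
    · rw [← h, hFx]
    · have hmono : AntitoneOn F (Set.Icc y x) := by
        apply antitoneOn_of_deriv_nonpos (convex_Icc y x) (hcont y x hy0 hx1)
        · intro t ht
          rw [interior_Icc] at ht
          exact ((hderiv t (lt_trans hy0 ht.1) (lt_trans ht.2 hx1)).differentiableAt).differentiableWithinAt
        · intro t ht
          rw [interior_Icc] at ht
          rw [(hderiv t (lt_trans hy0 ht.1) (lt_trans ht.2 hx1)).deriv]
          have := hkey t (lt_trans hy0 ht.1) (lt_trans ht.2 hx1)
          have ht1 : t - x ≤ 0 := by linarith [ht.2]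
          exact mul_nonpos_of_nonpos_of_nonneg ht1 this
      have := hmono (Set.mem_Icc.2 ⟨le_refl y, le_of_lt h⟩) (Set.mem_Icc.2 ⟨le_of_lt h, le_refl x⟩) (le_of_lt h)
      rw [hFx] at this; exact this
  have e1 : Real.log (x/y) = Real.log x - Real.log y := Real.log_div (ne_of_gt hx0) (ne_of_gt hy0)
  have e2 : Real.log ((1-x)/(1-y)) = Real.log (1-x) - Real.log (1-y) :=
    Real.log_div (by intro h; nlinarith) (by intro h; nlinarith)
  simp only [hF] at goal
  rw [e1, e2]
  nlinarith [goal]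

lemma aux_pinsker_bin (x y : ℝ) (hx0 : 0 ≤ x) (hx1 : x ≤ 1) (hy0 : 0 ≤ y) (hy1 : y ≤ 1)
    (h0 : y = 0 → x = 0) (h1 : y = 1 → x = 1) :
    2*(x-y)^2 ≤ x*Real.log (x/y) + (1-x)*Real.log ((1-x)/(1-y)) := by
  rcases eq_or_lt_of_le hy0 with h | hy0'
  · have hx := h0 h.symm; simp [← h, hx]
  rcases eq_or_lt_of_le hy1 with h | hy1'
  · have hx := h1 h; simp [h, hx]
  rcases eq_or_lt_of_le hx0 with h | hx0'
  · have := aux_pinsker_aux y (le_of_lt hy0') hy1'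
    have e : Real.log (1/(1-y)) = -Real.log (1-y) := by
      rw [one_div, Real.log_inv]
    simp only [← h]
    simp only [zero_mul, zero_add, sub_zero, one_mul]
    rw [e]
    nlinarith
  rcases eq_or_lt_of_le hx1 with h | hx1'
  · have := aux_pinsker_aux (1-y) (by linarith) (by linarith)
    simp only [h]
    rw [sub_self, zero_mul, add_zero, one_mul]
    have e : Real.log (1/y) = -Real.log y := by rw [one_div, Real.log_inv]
    have e2 : (1:ℝ) - (1-y) = y := by ring
    rw [e2] at this
    rw [e]
    nlinarith
  exact aux_pinsker_interior x y hx0' hx1' hy0' hy1'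

lemma aux_gibbs {ι : Type*} (t : Finset ι) (c d : ι → ℝ) (hc : ∀ i ∈ t, 0 ≤ c i)
    (hd : ∀ i ∈ t, 0 ≤ d i) (habs : ∀ i ∈ t, d i = 0 → c i = 0) :
    (∑ i ∈ t, c i) * Real.log ((∑ i ∈ t, c i) / (∑ i ∈ t, d i)) ≤
      ∑ i ∈ t, (if 0 < c i then c i * Real.log (c i / d i) else 0) := by
  set C := ∑ i ∈ t, c i with hC
  set D := ∑ i ∈ t, d i with hD
  have hC0 : 0 ≤ C := Finset.sum_nonneg hc
  have hD0 : 0 ≤ D := Finset.sum_nonneg hd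
  rcases eq_or_lt_of_le hD0 with hDz | hDpos
  · have hdz : ∀ i ∈ t, d i = 0 := by
      intro i hi
      exact (Finset.sum_eq_zero_iff_of_nonneg hd).1 hDz.symm i hi
    have hcz : ∀ i ∈ t, c i = 0 := fun i hi => habs i hi (hdz i hi)
    have : C = 0 := Finset.sum_eq_zero hcz
    rw [this, zero_mul]
    apply Finset.sum_nonneg
    intro i hi
    rw [hcz i hi]
    simp
  rcases eq_or_lt_of_le hC0 with hCz | hCpos
  · have hcz : ∀ i ∈ t, c i = 0 := by
      intro i hi
      exact (Finset.sum_eq_zero_iff_of_nonneg hc).1 hCz.symm i hi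
    rw [← hCz, zero_mul]
    apply Finset.sum_nonneg
    intro i hi
    rw [hcz i hi]; simp
  have key : ∀ i ∈ t, c i * Real.log (C/D) + (c i - d i * (C/D)) ≤
      (if 0 < c i then c i * Real.log (c i / d i) else 0) := by
    intro i hi
    rcases eq_or_lt_of_le (hc i hi) with h | h
    · rw [if_neg (by rw [← h]; simp), ← h]
      have : 0 ≤ d i * (C/D) := mul_nonneg (hd i hi) (by positivity)
      linarith
    · rw [if_pos h]
      have hdi : 0 < d i := by
        rcases eq_or_lt_of_le (hd i hi) with h' | h'
        · exact absurd (habs i hi h'.symm) (by linarith)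
        · exact h'
      have hlog : 1 - (d i * C)/(c i * D) ≤ Real.log ((c i * D)/(d i * C)) := by
        have h2 := Real.log_le_sub_one_of_pos (x := (d i * C)/(c i * D)) (by positivity)
        have e' : Real.log ((d i * C)/(c i * D)) = -Real.log ((c i * D)/(d i * C)) := by
          rw [← Real.log_inv]; congr 1; rw [inv_div]
        rw [e'] at h2; linarith
      have e : Real.log ((c i * D)/(d i * C)) = Real.log (c i / d i) - Real.log (C/D) := by
        rw [Real.log_div (by positivity) (by positivity), Real.log_div (ne_of_gt h) (ne_of_gt hdi),
          Real.log_div (ne_of_gt hCpos) (ne_of_gt hDpos), Real.log_mul (ne_of_gt h) (ne_of_gt hDpos),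
          Real.log_mul (ne_of_gt hdi) (ne_of_gt hCpos)]
        ring
      rw [e] at hlog
      have := mul_le_mul_of_nonneg_left hlog (le_of_lt h)
      have e2 : c i * ((d i * C)/(c i * D)) = d i * (C/D) := by
        field_simp
      nlinarith [this, e2]
  calc C * Real.log (C/D) = ∑ i ∈ t, (c i * Real.log (C/D) + (c i - d i * (C/D))) := by
        rw [Finset.sum_add_distrib, Finset.sum_sub_distrib, ← Finset.sum_mul, ← Finset.sum_mul,
          ← hC, ← hD]
        field_simp
        ring
    _ ≤ _ := Finset.sum_le_sum key

lemma aux_sum_ite_const {β : Type*} [Fintype β] (P : Prop) [Decidable P] (f : β → ℝ) :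
    (∑ x : β, if P then f x else 0) = if P then ∑ x : β, f x else 0 := by
  split <;> simp

lemma aux_ite_swap_sum {β : Type*} [Fintype β] [DecidableEq β] (C : β → Prop) [DecidablePred C]
    (g : β) (f : β → ℝ) :
    (∑ x : β, if C x then if x = g then f x else 0 else 0) = if C g then f g else 0 := by
  have h : ∀ x : β, (if C x then if x = g then f x else 0 else 0)
      = (if x = g then (if C x then f x else 0) else 0) := by
    intro x; by_cases h : x = g <;> by_cases h2 : C x <;> simp [h, h2]
  simp only [h, Finset.sum_ite_eq', Finset.mem_univ, if_true]

lemma aux_sum3_comm {α β γ : Type*} [Fintype α] [Fintype β] [Fintype γ] (f : α → β → γ → ℝ) :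
    ∑ x : α, ∑ y : β, ∑ w : γ, f x y w = ∑ w : γ, ∑ y : β, ∑ x : α, f x y w := by
  calc ∑ x : α, ∑ y : β, ∑ w : γ, f x y w
      = ∑ x : α, ∑ w : γ, ∑ y : β, f x y w :=
        Finset.sum_congr rfl fun _ _ => Finset.sum_comm
    _ = ∑ w : γ, ∑ x : α, ∑ y : β, f x y w := Finset.sum_comm
    _ = ∑ w : γ, ∑ y : β, ∑ x : α, f x y w :=
        Finset.sum_congr rfl fun _ _ => Finset.sum_comm

lemma aux_sum_eq_single_real {α : Type*} [Fintype α] [DecidableEq α] (a0 : α) (f : α → ℝ)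
    (h : ∀ b, b ≠ a0 → f b = 0) : ∑ x : α, f x = f a0 :=
  Finset.sum_eq_single a0 (fun b _ hb => h b hb)
    (fun h' => absurd (Finset.mem_univ a0) h')

section PrEval

variable {𝒮 𝒢 𝒜 𝒱 : Type*} [Fintype 𝒮] [Fintype 𝒢] [Fintype 𝒜] [Fintype 𝒱]
  (p : 𝒮 × 𝒢 × 𝒜 → ℝ) (v : 𝒮 × 𝒢 → 𝒱)

lemma aux_sum_expand (f : 𝒮 × 𝒢 × 𝒜 → ℝ) :
    ∑ ω : 𝒮 × 𝒢 × 𝒜, f ω = ∑ s : 𝒮, ∑ g : 𝒢, ∑ a : 𝒜, f (s,g,a) := by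
  rw [Fintype.sum_prod_type]
  exact Finset.sum_congr rfl fun s _ => Fintype.sum_prod_type _

lemma aux_Pr_expand {X : Type*} (f : 𝒮 × 𝒢 × 𝒜 → X) (x : X) :
    Pr p f x = ∑ s : 𝒮, ∑ g : 𝒢, ∑ a : 𝒜, if f (s,g,a) = x then p (s,g,a) else 0 := by
  unfold Pr
  exact aux_sum_expand _

lemma aux_Pr_eval_joint (a : 𝒜) (g : 𝒢) (s : 𝒮) (vv : 𝒱) :
    Pr p (fun ω => ((ω.2.2 : 𝒜), (ω.2.1 : 𝒢), (ω.1, v (ω.1, ω.2.1)))) (a, g, (s, vv))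
      = if v (s,g) = vv then p (s,g,a) else 0 := by
  rw [aux_Pr_expand]
  simp [Prod.mk.injEq, ite_and, aux_sum_ite_const, Finset.sum_ite_eq, Finset.sum_ite_eq']

lemma aux_Pr_eval_W (s : 𝒮) (vv : 𝒱) :
    Pr p (fun ω => ((ω.1 : 𝒮), v (ω.1, ω.2.1))) (s, vv)
      = ∑ g : 𝒢, if v (s,g) = vv then pSG p s g else 0 := by
  rw [aux_Pr_expand]
  simp [Prod.mk.injEq, ite_and, aux_sum_ite_const, Finset.sum_ite_eq, Finset.sum_ite_eq', pSG]

lemma aux_Pr_eval_A (a : 𝒜) (s : 𝒮) (vv : 𝒱) :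
    Pr p (fun ω => ((ω.2.2 : 𝒜), (ω.1 : 𝒮), v (ω.1, ω.2.1))) (a, (s, vv))
      = ∑ g : 𝒢, if v (s,g) = vv then p (s,g,a) else 0 := by
  rw [aux_Pr_expand]
  simp [Prod.mk.injEq, ite_and, aux_sum_ite_const, Finset.sum_ite_eq, Finset.sum_ite_eq']

lemma aux_Pr_eval_G (g : 𝒢) (s : 𝒮) (vv : 𝒱) :
    Pr p (fun ω => ((ω.2.1 : 𝒢), (ω.1 : 𝒮), v (ω.1, ω.2.1))) (g, (s, vv))
      = if v (s,g) = vv then pSG p s g else 0 := by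
  rw [aux_Pr_expand]
  simp [Prod.mk.injEq, ite_and, aux_sum_ite_const, Finset.sum_ite_eq, Finset.sum_ite_eq', pSG]

lemma aux_Pr_eval_SVG (s : 𝒮) (vv : 𝒱) (g : 𝒢) :
    Pr p (fun ω => ((ω.1 : 𝒮), v (ω.1, ω.2.1), ω.2.1)) (s, vv, g)
      = if v (s,g) = vv then pSG p s g else 0 := by
  rw [aux_Pr_expand]
  simp only [Prod.mk.injEq, ite_and, aux_sum_ite_const, Finset.sum_ite_eq, Finset.sum_ite_eq',
    Finset.mem_univ, if_true]
  rw [aux_ite_swap_sum (fun x => v (s,x) = vv) g]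
  rfl

lemma aux_qSVG_eval (B : 𝒮 × 𝒱 → Set 𝒜) (s : 𝒮) (vv : 𝒱) (g : 𝒢) (hv : v (s,g) = vv) :
    qSVG p v B s vv g
      = (∑ a : 𝒜, if a ∈ B (s,vv) then p (s,g,a) else 0) / pSG p s g := by
  unfold qSVG
  congr 1
  · rw [aux_sum_expand]
    refine (aux_sum_eq_single_real s _ ?_).trans ?_
    · intro b hb
      refine Finset.sum_eq_zero fun g' _ => Finset.sum_eq_zero fun a' _ => ?_
      simp [hb]
    · refine (aux_sum_eq_single_real g _ ?_).trans ?_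
      · intro b hb
        refine Finset.sum_eq_zero fun a' _ => ?_
        simp [hb]
      · refine Finset.sum_congr rfl fun a' _ => ?_
        simp [hv]
  · rw [aux_sum_expand]
    refine (aux_sum_eq_single_real s _ ?_).trans ?_
    · intro b hb
      refine Finset.sum_eq_zero fun g' _ => Finset.sum_eq_zero fun a' _ => ?_
      simp [hb]
    · refine (aux_sum_eq_single_real g _ ?_).trans ?_
      · intro b hb
        refine Finset.sum_eq_zero fun a' _ => ?_
        simp [hb]
      · simp [hv, pSG]

lemma aux_qSV_eval (B : 𝒮 × 𝒱 → Set 𝒜) (s : 𝒮) (vv : 𝒱) :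
    qSV p v B s vv
      = (∑ a : 𝒜, if a ∈ B (s,vv) then (∑ g' : 𝒢, if v (s,g') = vv then p (s,g',a) else 0) else 0)
        / (∑ g' : 𝒢, if v (s,g') = vv then pSG p s g' else 0) := by
  unfold qSV
  congr 1
  · rw [aux_sum_expand]
    refine (aux_sum_eq_single_real s _ ?_).trans ?_
    · intro b hb
      refine Finset.sum_eq_zero fun g' _ => Finset.sum_eq_zero fun a' _ => ?_
      simp [hb]
    · rw [Finset.sum_comm]
      refine Finset.sum_congr rfl fun a' _ => ?_
      by_cases hm : a' ∈ B (s,vv)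
      · simp [hm]
      · simp [hm]
  · rw [aux_sum_expand]
    refine (aux_sum_eq_single_real s _ ?_).trans ?_
    · intro b hb
      refine Finset.sum_eq_zero fun g' _ => Finset.sum_eq_zero fun a' _ => ?_
      simp [hb]
    · refine Finset.sum_congr rfl fun g' _ => ?_
      by_cases hvg : v (s,g') = vv
      · simp [hvg, pSG]
      · simp [hvg]

end PrEval

end Aux

lemma aux_two_mul_sum3 {α β γ : Type*} [Fintype α] [Fintype β] [Fintype γ]
    (f : α → β → γ → ℝ) :
    2 * (∑ a : α, ∑ b : β, ∑ c : γ, f a b c) = ∑ a : α, ∑ b : β, ∑ c : γ, 2 * f a b c := by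
  simp only [Finset.mul_sum]

lemma aux_group_main {𝒮 𝒢 𝒜 𝒱 : Type*} [Fintype 𝒮] [Fintype 𝒢] [Fintype 𝒜] [Fintype 𝒱]
    (p : 𝒮 × 𝒢 × 𝒜 → ℝ) (hp0 : ∀ ω, 0 ≤ p ω) (v : 𝒮 × 𝒢 → 𝒱) (B : 𝒮 × 𝒱 → Set 𝒜)
    (s : 𝒮) (vv : 𝒱) (g : 𝒢) (hv : v (s,g) = vv) (hpg : 0 < pSG p s g) :
    2 * (pSG p s g * (qSVG p v B s vv g - qSV p v B s vv) ^ 2)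
      ≤ ∑ a : 𝒜,
        (if 0 < (if v (s,g) = vv then p (s,g,a) else 0) then
          (if v (s,g) = vv then p (s,g,a) else 0) *
            Real.log (((if v (s,g) = vv then p (s,g,a) else 0) *
                (∑ g' : 𝒢, if v (s,g') = vv then pSG p s g' else 0)) /
              ((∑ g' : 𝒢, if v (s,g') = vv then p (s,g',a) else 0) *
                (if v (s,g) = vv then pSG p s g else 0)))
        else 0) := by
  classical
  have hps : ∀ g', 0 ≤ pSG p s g' := fun g' => Finset.sum_nonneg fun a _ => hp0 _
  simp only [hv, eq_self_iff_true, if_true]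
  set PW : ℝ := ∑ g' : 𝒢, if v (s,g') = vv then pSG p s g' else 0 with hPWdef
  set PA : 𝒜 → ℝ := fun a => ∑ g' : 𝒢, if v (s,g') = vv then p (s,g',a) else 0 with hPAdef
  show 2 * (pSG p s g * (qSVG p v B s vv g - qSV p v B s vv) ^ 2)
      ≤ ∑ a : 𝒜, (if 0 < p (s,g,a) then
          p (s,g,a) * Real.log ((p (s,g,a) * PW) / (PA a * pSG p s g)) else 0)
  have hPA0 : ∀ a, 0 ≤ PA a := by
    intro a
    rw [hPAdef]
    exact Finset.sum_nonneg fun g' _ => by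
      by_cases h : v (s,g') = vv <;> simp [h, hp0 (s,g',a)]
  have hPAle : ∀ a, p (s,g,a) ≤ PA a := by
    intro a
    rw [hPAdef]
    have := Finset.single_le_sum (f := fun g' => if v (s,g') = vv then p (s,g',a) else 0)
      (fun g' _ => by by_cases h : v (s,g') = vv <;> simp [h, hp0 (s,g',a)]) (Finset.mem_univ g)
    simpa [hv] using this
  have hPWle : pSG p s g ≤ PW := by
    rw [hPWdef]
    have := Finset.single_le_sum (f := fun g' => if v (s,g') = vv then pSG p s g' else 0)
      (fun g' _ => by by_cases h : v (s,g') = vv <;> simp [h, hps g']) (Finset.mem_univ g)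
    simpa [hv] using this
  have hPWpos : 0 < PW := lt_of_lt_of_le hpg hPWle
  have hPAsum : ∑ a : 𝒜, PA a = PW := by
    rw [hPAdef, hPWdef]
    rw [Finset.sum_comm]
    refine Finset.sum_congr rfl fun g' _ => ?_
    rw [aux_sum_ite_const]
    rfl
  have hQ : qSVG p v B s vv g
      = (∑ a : 𝒜, if a ∈ B (s,vv) then p (s,g,a) else 0) / pSG p s g :=
    aux_qSVG_eval p v B s vv g hv
  have hQb : qSV p v B s vv = (∑ a : 𝒜, if a ∈ B (s,vv) then PA a else 0) / PW := by
    rw [aux_qSV_eval p v B s vv]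
  set tB : Finset 𝒜 := Finset.univ.filter (fun a : 𝒜 => a ∈ B (s,vv)) with htB
  set tBc : Finset 𝒜 := Finset.univ.filter (fun a : 𝒜 => ¬ a ∈ B (s,vv)) with htBc
  set d : 𝒜 → ℝ := fun a => PA a * (pSG p s g / PW) with hd
  set CB := ∑ a ∈ tB, p (s,g,a) with hCB
  set DB := ∑ a ∈ tB, d a with hDB
  set CBc := ∑ a ∈ tBc, p (s,g,a) with hCBc
  set DBc := ∑ a ∈ tBc, d a with hDBc
  have hsum_c : CB + CBc = pSG p s g := by
    rw [hCB, hCBc, htB, htBc, Finset.sum_filter_add_sum_filter_not]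
    rfl
  have hsum_d : DB + DBc = pSG p s g := by
    rw [hDB, hDBc, htB, htBc, Finset.sum_filter_add_sum_filter_not]
    simp only [hd]
    rw [← Finset.sum_mul, hPAsum]
    field_simp
  have hCB0 : 0 ≤ CB := Finset.sum_nonneg fun a _ => hp0 _
  have hCBc0 : 0 ≤ CBc := Finset.sum_nonneg fun a _ => hp0 _
  have hd0 : ∀ a, 0 ≤ d a := by
    intro a
    simp only [hd]
    exact mul_nonneg (hPA0 a) (by positivity)
  have hDB0 : 0 ≤ DB := Finset.sum_nonneg fun a _ => hd0 a
  have hDBc0 : 0 ≤ DBc := Finset.sum_nonneg fun a _ => hd0 a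
  have habs : ∀ a, d a = 0 → p (s,g,a) = 0 := by
    intro a h
    simp only [hd] at h
    have hr : 0 < pSG p s g / PW := by positivity
    have h2 : PA a = 0 := by
      rcases mul_eq_zero.1 h with h' | h'
      · exact h'
      · exact absurd h' (ne_of_gt hr)
    have h3 := hPAle a
    have h4 := hp0 (s,g,a)
    linarith
  have hCBq : CB = qSVG p v B s vv g * pSG p s g := by
    rw [hQ, div_mul_cancel₀ _ (ne_of_gt hpg), hCB, htB, Finset.sum_filter]
  have hSB : ∑ a ∈ tB, PA a = qSV p v B s vv * PW := by
    rw [hQb, div_mul_cancel₀ _ (ne_of_gt hPWpos), htB, Finset.sum_filter]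
  have hDBq : DB = qSV p v B s vv * pSG p s g := by
    rw [hDB]
    simp only [hd]
    rw [← Finset.sum_mul, hSB]
    field_simp
  have hCBcq : CBc = (1 - qSVG p v B s vv g) * pSG p s g := by
    have h1 := hsum_c
    rw [hCBq] at h1
    linarith
  have hDBcq : DBc = (1 - qSV p v B s vv) * pSG p s g := by
    have h1 := hsum_d
    rw [hDBq] at h1
    linarith
  have hQeq : qSVG p v B s vv g = CB / pSG p s g := by
    rw [hCBq]
    field_simp
  have hQbeq : qSV p v B s vv = DB / pSG p s g := by
    rw [hDBq]
    field_simp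
  have hQ0 : 0 ≤ qSVG p v B s vv g := by
    rw [hQeq]; exact div_nonneg hCB0 (le_of_lt hpg)
  have hQ1 : qSVG p v B s vv g ≤ 1 := by
    rw [hQeq, div_le_one hpg]; linarith
  have hQb0 : 0 ≤ qSV p v B s vv := by
    rw [hQbeq]; exact div_nonneg hDB0 (le_of_lt hpg)
  have hQb1 : qSV p v B s vv ≤ 1 := by
    rw [hQbeq, div_le_one hpg]; linarith
  have h0 : qSV p v B s vv = 0 → qSVG p v B s vv g = 0 := by
    intro h
    have hDBz : DB = 0 := by rw [hDBq, h, zero_mul]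
    have hdz : ∀ a ∈ tB, d a = 0 :=
      fun a ha => (Finset.sum_eq_zero_iff_of_nonneg (fun a _ => hd0 a)).1 hDBz a ha
    have hcz : CB = 0 := Finset.sum_eq_zero fun a ha => habs a (hdz a ha)
    rw [hQeq, hcz, zero_div]
  have h1 : qSV p v B s vv = 1 → qSVG p v B s vv g = 1 := by
    intro h
    have hDBcz : DBc = 0 := by rw [hDBcq, h]; ring
    have hdz : ∀ a ∈ tBc, d a = 0 :=
      fun a ha => (Finset.sum_eq_zero_iff_of_nonneg (fun a _ => hd0 a)).1 hDBcz a ha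
    have hcz : CBc = 0 := Finset.sum_eq_zero fun a ha => habs a (hdz a ha)
    have : CB = pSG p s g := by rw [← hsum_c, hcz]; ring
    rw [hQeq, this, div_self (ne_of_gt hpg)]
  have hg1 := aux_gibbs tB (fun a => p (s,g,a)) d (fun a _ => hp0 _) (fun a _ => hd0 a)
    (fun a _ h => habs a h)
  have hg2 := aux_gibbs tBc (fun a => p (s,g,a)) d (fun a _ => hp0 _) (fun a _ => hd0 a)
    (fun a _ h => habs a h)
  calc 2 * (pSG p s g * (qSVG p v B s vv g - qSV p v B s vv) ^ 2)
      = pSG p s g * (2 * (qSVG p v B s vv g - qSV p v B s vv) ^ 2) := by ring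
    _ ≤ pSG p s g * (qSVG p v B s vv g *
          Real.log (qSVG p v B s vv g / qSV p v B s vv) +
          (1 - qSVG p v B s vv g) *
          Real.log ((1 - qSVG p v B s vv g) / (1 - qSV p v B s vv))) :=
        mul_le_mul_of_nonneg_left
          (aux_pinsker_bin _ _ hQ0 hQ1 hQb0 hQb1 h0 h1) (le_of_lt hpg)
    _ = CB * Real.log (CB / DB) + CBc * Real.log (CBc / DBc) := by
        rw [hCBq, hDBq, hCBcq, hDBcq, mul_div_mul_right _ _ (ne_of_gt hpg),
          mul_div_mul_right _ _ (ne_of_gt hpg)]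
        ring
    _ ≤ (∑ a ∈ tB, if 0 < p (s,g,a) then
            p (s,g,a) * Real.log (p (s,g,a) / d a) else 0)
        + (∑ a ∈ tBc, if 0 < p (s,g,a) then
            p (s,g,a) * Real.log (p (s,g,a) / d a) else 0) := add_le_add hg1 hg2
    _ = ∑ a : 𝒜, (if 0 < p (s,g,a) then
          p (s,g,a) * Real.log (p (s,g,a) / d a) else 0) := by
        rw [htB, htBc, Finset.sum_filter_add_sum_filter_not]
    _ = ∑ a : 𝒜, (if 0 < p (s,g,a) then
          p (s,g,a) * Real.log ((p (s,g,a) * PW) / (PA a * pSG p s g)) else 0) := by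
        refine Finset.sum_congr rfl fun a _ => ?_
        by_cases hca : 0 < p (s,g,a)
        · rw [if_pos hca, if_pos hca]
          have hPAa : 0 < PA a := lt_of_lt_of_le hca (hPAle a)
          congr 1
          simp only [hd]
          rw [div_mul_eq_div_div, div_div]
          congr 1
          field_simp
        · rw [if_neg hca, if_neg hca]

/-- **Positive conditional action variance lower-bounds the information
gap.** With `V = v(S,G)` and a family of action sets `B : 𝒮 × 𝒱 → Set 𝒜`,
`I(A;G|S,V) ≥ 2 ∑_{(s,v,g)} P(S=s,V=v,G=g) (q(s,v,g) − q̄(s,v))²`; in particular, if the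
expected conditional variance is strictly positive then `I(A;G|S,V) > 0`. -/
theorem cmi_ge_two_mul_variance {𝒮 𝒢 𝒜 𝒱 : Type*}
    [Fintype 𝒮] [Fintype 𝒢] [Fintype 𝒜] [Fintype 𝒱]
    [Nonempty 𝒮] [Nonempty 𝒢] [Nonempty 𝒜] [Nonempty 𝒱]
    (p : 𝒮 × 𝒢 × 𝒜 → ℝ) (hp0 : ∀ ω, 0 ≤ p ω) (hp1 : ∑ ω : 𝒮 × 𝒢 × 𝒜, p ω = 1)
    (v : 𝒮 × 𝒢 → 𝒱) (B : 𝒮 × 𝒱 → Set 𝒜) :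
    CMI p (fun ω => ω.2.2) (fun ω => ω.2.1) (fun ω => (ω.1, v (ω.1, ω.2.1))) ≥
      2 * ∑ s : 𝒮, ∑ vv : 𝒱, ∑ g : 𝒢,
        (if 0 < Pr p (fun ω => (ω.1, v (ω.1, ω.2.1), ω.2.1)) (s, vv, g) then
          Pr p (fun ω => (ω.1, v (ω.1, ω.2.1), ω.2.1)) (s, vv, g) *
            (qSVG p v B s vv g - qSV p v B s vv) ^ 2
        else 0) ∧
    (0 < ∑ s : 𝒮, ∑ vv : 𝒱, ∑ g : 𝒢,
        (if 0 < Pr p (fun ω => (ω.1, v (ω.1, ω.2.1), ω.2.1)) (s, vv, g) then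
          Pr p (fun ω => (ω.1, v (ω.1, ω.2.1), ω.2.1)) (s, vv, g) *
            (qSVG p v B s vv g - qSV p v B s vv) ^ 2
        else 0) →
      0 < CMI p (fun ω => ω.2.2) (fun ω => ω.2.1) (fun ω => (ω.1, v (ω.1, ω.2.1)))) := by
  classical
  have hps : ∀ s g, 0 ≤ pSG p s g := fun s g => Finset.sum_nonneg fun a _ => hp0 _
  set T : 𝒮 → 𝒱 → 𝒢 → 𝒜 → ℝ := fun s vv g a =>
    if 0 < (if v (s,g) = vv then p (s,g,a) else 0) then
      (if v (s,g) = vv then p (s,g,a) else 0) *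
        Real.log (((if v (s,g) = vv then p (s,g,a) else 0) *
            (∑ g' : 𝒢, if v (s,g') = vv then pSG p s g' else 0)) /
          ((∑ g' : 𝒢, if v (s,g') = vv then p (s,g',a) else 0) *
            (if v (s,g) = vv then pSG p s g else 0)))
    else 0 with hT
  have hrw : CMI p (fun ω => ω.2.2) (fun ω => ω.2.1) (fun ω => (ω.1, v (ω.1, ω.2.1)))
      = ∑ s : 𝒮, ∑ vv : 𝒱, ∑ g : 𝒢, ∑ a : 𝒜, T s vv g a := by
    unfold CMI
    rw [aux_sum3_comm]
    rw [Fintype.sum_prod_type]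
    refine Finset.sum_congr rfl fun s _ => Finset.sum_congr rfl fun vv _ =>
      Finset.sum_congr rfl fun g _ => Finset.sum_congr rfl fun a _ => ?_
    simp only [hT, aux_Pr_eval_joint p v, aux_Pr_eval_A p v, aux_Pr_eval_G p v,
      aux_Pr_eval_W p v]
  have group : ∀ (s : 𝒮) (vv : 𝒱) (g : 𝒢),
      2 * (if 0 < Pr p (fun ω => (ω.1, v (ω.1, ω.2.1), ω.2.1)) (s, vv, g) then
          Pr p (fun ω => (ω.1, v (ω.1, ω.2.1), ω.2.1)) (s, vv, g) *
            (qSVG p v B s vv g - qSV p v B s vv) ^ 2 else 0)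
        ≤ ∑ a : 𝒜, T s vv g a := by
    intro s vv g
    rw [aux_Pr_eval_SVG p v]
    by_cases hv : v (s,g) = vv
    · rcases eq_or_lt_of_le (hps s g) with hz | hpg
      · have hpa : ∀ a, p (s,g,a) = 0 := by
          intro a
          exact (Finset.sum_eq_zero_iff_of_nonneg (fun a _ => hp0 (s,g,a))).1 hz.symm a
            (Finset.mem_univ a)
        have hTz : ∀ a, T s vv g a = 0 := fun a => by simp [hT, hpa a, lt_irrefl]
        rw [if_neg (by rw [if_pos hv, ← hz]; exact lt_irrefl 0)]
        simp [hTz]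
      · rw [if_pos (show (0:ℝ) < if v (s,g) = vv then pSG p s g else 0 by
          rw [if_pos hv]; exact hpg), if_pos hv]
        exact aux_group_main p hp0 v B s vv g hv hpg
    · have hTz : ∀ a, T s vv g a = 0 := fun a => by simp [hT, hv, lt_irrefl]
      rw [if_neg (show ¬ (0:ℝ) < if v (s,g) = vv then pSG p s g else 0 by
        rw [if_neg hv]; exact lt_irrefl 0)]
      simp [hTz]
  have hvar0 : 0 ≤ ∑ s : 𝒮, ∑ vv : 𝒱, ∑ g : 𝒢,
      (if 0 < Pr p (fun ω => (ω.1, v (ω.1, ω.2.1), ω.2.1)) (s, vv, g) then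
        Pr p (fun ω => (ω.1, v (ω.1, ω.2.1), ω.2.1)) (s, vv, g) *
          (qSVG p v B s vv g - qSV p v B s vv) ^ 2
      else 0) := by
    refine Finset.sum_nonneg fun s _ => Finset.sum_nonneg fun vv _ =>
      Finset.sum_nonneg fun g _ => ?_
    split
    · next h => exact mul_nonneg (le_of_lt h) (sq_nonneg _)
    · exact le_refl 0
  have hmain : CMI p (fun ω => ω.2.2) (fun ω => ω.2.1) (fun ω => (ω.1, v (ω.1, ω.2.1))) ≥
      2 * ∑ s : 𝒮, ∑ vv : 𝒱, ∑ g : 𝒢,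
        (if 0 < Pr p (fun ω => (ω.1, v (ω.1, ω.2.1), ω.2.1)) (s, vv, g) then
          Pr p (fun ω => (ω.1, v (ω.1, ω.2.1), ω.2.1)) (s, vv, g) *
            (qSVG p v B s vv g - qSV p v B s vv) ^ 2
        else 0) := by
    rw [ge_iff_le, hrw, aux_two_mul_sum3]
    exact Finset.sum_le_sum fun s _ => Finset.sum_le_sum fun vv _ =>
      Finset.sum_le_sum fun g _ => group s vv g
  exact ⟨hmain, fun hpos => lt_of_lt_of_le (by linarith) hmain⟩
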